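/- Amplitude bound for the reduced Gardner–Ostrovsky equation: let c > 0, σ ∈ ℝ, α > 0, and B ∈ ℝ. Let φ : ℝ → ℝ be continuous, 2π-periodic, with zero mean, satisfying −c·φ(x) + (σ/2)·φ(x)² + (α/3)·φ(x)³ = −(K∗φ)(x) + B for all x ∈ ℝ. Then sup_{x∈ℝ} φ(x) − inf_{x∈ℝ} φ(x) ≤ 2·√(σ²/(4α²) + c/α). -/

import Mathlib

open Real MeasureTheory Filter

/-- The 2π-periodic kernel of `D⁻²`, equal to `(1/(4π))(|x|−π)² − π/12` on `[−π,π]`. -/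
noncomputable def Kper (x : ℝ) : ℝ :=
  (1 / (4 * π)) * (|x - 2 * π * ((round (x / (2 * π)) : ℤ) : ℝ)| - π) ^ 2 - π / 12

/-- Periodic convolution with the kernel `Kper`. -/
noncomputable def Kconv (φ : ℝ → ℝ) (x : ℝ) : ℝ :=
  ∫ y in (-π)..π, Kper (x - y) * φ y



open Set

lemma Kper_of_mem_Icc_neg {u : ℝ} (h0 : -π ≤ u) (h1 : u ≤ 0) :
    Kper u = (1 / (4 * π)) * (u + π) ^ 2 - π / 12 := by
  have hπ := Real.pi_pos
  have hr : round (u / (2 * π)) = 0 := by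
    rw [round_eq_zero_iff]
    constructor
    · rw [le_div_iff₀ (by linarith)]; linarith
    · rw [div_lt_iff₀ (by linarith)]; linarith
  rw [Kper, hr]
  push_cast
  rw [mul_zero, sub_zero, abs_of_nonpos h1]
  ring

lemma Kper_of_mem_Icc_pos {u : ℝ} (h0 : 0 ≤ u) (h1 : u ≤ π) :
    Kper u = (1 / (4 * π)) * (u - π) ^ 2 - π / 12 := by
  have hπ := Real.pi_pos
  rcases lt_or_eq_of_le h1 with h | h
  · have hr : round (u / (2 * π)) = 0 := by
      rw [round_eq_zero_iff]
      constructor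
      · rw [le_div_iff₀ (by linarith)]; linarith
      · rw [div_lt_iff₀ (by linarith)]; linarith
    rw [Kper, hr]
    push_cast
    rw [mul_zero, sub_zero, abs_of_nonneg h0]
  · subst h
    have h2 : π / (2 * π) = 1 / 2 := by field_simp
    have hr : round (π / (2 * π)) = 1 := by rw [h2]; norm_num [round_eq]
    rw [Kper, hr]
    push_cast
    rw [show π - 2 * π * 1 = -π by ring, abs_neg, abs_of_nonneg hπ.le]

lemma Kper_periodic : Function.Periodic Kper (2 * π) := by
  intro x
  have hπ := Real.pi_pos
  have h : (x + 2 * π) / (2 * π) = x / (2 * π) + 1 := by field_simp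
  rw [Kper, Kper, h, round_add_one]
  push_cast
  ring_nf

noncomputable def P0 (φ : ℝ → ℝ) (x : ℝ) : ℝ := ∫ y in (0:ℝ)..x, φ y
noncomputable def P1 (φ : ℝ → ℝ) (x : ℝ) : ℝ := ∫ y in (0:ℝ)..x, y * φ y
noncomputable def P2 (φ : ℝ → ℝ) (x : ℝ) : ℝ := ∫ y in (0:ℝ)..x, y ^ 2 * φ y

noncomputable def Psi (φ : ℝ → ℝ) (x : ℝ) : ℝ :=
  (1 / (4 * π)) *
    ((x - π) ^ 2 * (P0 φ x - P0 φ (x - π)) - 2 * (x - π) * (P1 φ x - P1 φ (x - π))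
      + (P2 φ x - P2 φ (x - π))
      + ((x + π) ^ 2 * (P0 φ (x + π) - P0 φ x) - 2 * (x + π) * (P1 φ (x + π) - P1 φ x)
      + (P2 φ (x + π) - P2 φ x)))

noncomputable def D1 (φ : ℝ → ℝ) (x : ℝ) : ℝ :=
  -(P0 φ x - P0 φ (x - π)) - (1 / (2 * π)) * (P1 φ (x + π) - P1 φ (x - π))

section
variable {φ : ℝ → ℝ}

lemma mean_zero_window (hφp : Function.Periodic φ (2 * π))
    (hφ0 : (∫ y in (-π)..π, φ y) = 0) (x : ℝ) : (∫ y in (x - π)..(x + π), φ y) = 0 := by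
  have h := hφp.intervalIntegral_add_eq (x - π) (-π)
  rw [show x - π + 2 * π = x + π by ring, show -π + 2 * π = π by ring] at h
  rw [h, hφ0]

lemma sub_P0 (hφc : Continuous φ) (a b : ℝ) : P0 φ b - P0 φ a = ∫ y in a..b, φ y :=
  intervalIntegral.integral_interval_sub_left (μ := volume)
    (hφc.intervalIntegrable _ _) (hφc.intervalIntegrable _ _)

lemma sub_P1 (hφc : Continuous φ) (a b : ℝ) : P1 φ b - P1 φ a = ∫ y in a..b, y * φ y :=
  intervalIntegral.integral_interval_sub_left (μ := volume)
    ((continuous_id.mul hφc).intervalIntegrable _ _)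
    ((continuous_id.mul hφc).intervalIntegrable _ _)

lemma sub_P2 (hφc : Continuous φ) (a b : ℝ) : P2 φ b - P2 φ a = ∫ y in a..b, y ^ 2 * φ y :=
  intervalIntegral.integral_interval_sub_left (μ := volume)
    (((continuous_pow 2).mul hφc).intervalIntegrable _ _)
    (((continuous_pow 2).mul hφc).intervalIntegrable _ _)

lemma P0_per (hφc : Continuous φ) (hφp : Function.Periodic φ (2 * π))
    (hφ0 : (∫ y in (-π)..π, φ y) = 0) (x : ℝ) : P0 φ (x + π) = P0 φ (x - π) := by
  have h := sub_P0 hφc (x - π) (x + π)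
  rw [mean_zero_window hφp hφ0 x] at h
  linarith

lemma quad_int (hφc : Continuous φ) (A a b : ℝ) :
    (∫ y in a..b, (A - y) ^ 2 * φ y)
      = A ^ 2 * (∫ y in a..b, φ y) - 2 * A * (∫ y in a..b, y * φ y)
        + ∫ y in a..b, y ^ 2 * φ y := by
  have h : ∀ y ∈ Set.uIcc a b, (A - y) ^ 2 * φ y
      = A ^ 2 * φ y - 2 * A * (y * φ y) + y ^ 2 * φ y := fun y _ => by ring
  rw [intervalIntegral.integral_congr h, intervalIntegral.integral_add,
    intervalIntegral.integral_sub, intervalIntegral.integral_const_mul,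
    intervalIntegral.integral_const_mul]
  · exact (continuous_const.mul hφc).intervalIntegrable _ _
  · exact (continuous_const.mul (continuous_id.mul hφc)).intervalIntegrable _ _
  · exact ((continuous_const.mul hφc).sub
      (continuous_const.mul (continuous_id.mul hφc))).intervalIntegrable _ _
  · exact ((continuous_pow 2).mul hφc).intervalIntegrable _ _
end

lemma conv_eq {φ : ℝ → ℝ} (hφc : Continuous φ) (hφp : Function.Periodic φ (2 * π))
    (hφ0 : (∫ y in (-π)..π, φ y) = 0) (x : ℝ) : Kconv φ x = Psi φ x := by
  have hπ := Real.pi_pos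
  -- the integrand is 2π-periodic in y
  have hper : Function.Periodic (fun y => Kper (x - y) * φ y) (2 * π) := by
    intro y
    have h : Kper (x - (y + 2 * π)) = Kper (x - y) := by
      have := Kper_periodic (x - (y + 2 * π))
      rw [show x - (y + 2 * π) + 2 * π = x - y by ring] at this
      exact this.symm
    simp only [h, hφp y]
  -- shift the integration window
  have hshift : Kconv φ x = ∫ y in (x - π)..(x + π), Kper (x - y) * φ y := by
    have h := hper.intervalIntegral_add_eq (-π) (x - π)
    rw [show -π + 2 * π = π by ring, show x - π + 2 * π = x + π by ring] at h
    exact h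
  -- pointwise identifications on the two halves
  have key1 : ∀ y ∈ Set.Icc (x - π) x,
      Kper (x - y) * φ y = ((1 / (4 * π)) * ((x - π) - y) ^ 2 - π / 12) * φ y := by
    intro y hy
    have h1 : 0 ≤ x - y := by have := hy.2; linarith
    have h2 : x - y ≤ π := by have := hy.1; linarith
    rw [Kper_of_mem_Icc_pos h1 h2]
    ring_nf
  have key2 : ∀ y ∈ Set.Icc x (x + π),
      Kper (x - y) * φ y = ((1 / (4 * π)) * ((x + π) - y) ^ 2 - π / 12) * φ y := by
    intro y hy
    have h1 : -π ≤ x - y := by have := hy.2; linarith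
    have h2 : x - y ≤ 0 := by have := hy.1; linarith
    rw [Kper_of_mem_Icc_neg h1 h2]
    ring_nf
  have e1 : (∫ y in (x - π)..x, Kper (x - y) * φ y)
      = ∫ y in (x - π)..x, ((1 / (4 * π)) * ((x - π) - y) ^ 2 - π / 12) * φ y := by
    apply intervalIntegral.integral_congr
    intro y hy
    rw [Set.uIcc_of_le (by linarith)] at hy
    exact key1 y hy
  have e2 : (∫ y in x..(x + π), Kper (x - y) * φ y)
      = ∫ y in x..(x + π), ((1 / (4 * π)) * ((x + π) - y) ^ 2 - π / 12) * φ y := by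
    apply intervalIntegral.integral_congr
    intro y hy
    rw [Set.uIcc_of_le (by linarith)] at hy
    exact key2 y hy
  have c1 : Continuous fun y => ((1 / (4 * π)) * ((x - π) - y) ^ 2 - π / 12) * φ y := by
    apply Continuous.mul _ hφc
    exact (continuous_const.mul ((continuous_const.sub continuous_id).pow 2)).sub continuous_const
  have c2 : Continuous fun y => ((1 / (4 * π)) * ((x + π) - y) ^ 2 - π / 12) * φ y := by
    apply Continuous.mul _ hφc
    exact (continuous_const.mul ((continuous_const.sub continuous_id).pow 2)).sub continuous_const
  have i1 : IntervalIntegrable (fun y => Kper (x - y) * φ y) volume (x - π) x := by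
    have hg := c1.intervalIntegrable (μ := volume) (x - π) x
    rw [intervalIntegrable_iff] at hg ⊢
    refine hg.congr_fun ?_ measurableSet_uIoc
    intro y hy
    rw [Set.uIoc_of_le (by linarith)] at hy
    exact (key1 y ⟨hy.1.le, hy.2⟩).symm
  have i2 : IntervalIntegrable (fun y => Kper (x - y) * φ y) volume x (x + π) := by
    have hg := c2.intervalIntegrable (μ := volume) x (x + π)
    rw [intervalIntegrable_iff] at hg ⊢
    refine hg.congr_fun ?_ measurableSet_uIoc
    intro y hy
    rw [Set.uIoc_of_le (by linarith)] at hy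
    exact (key2 y ⟨hy.1.le, hy.2⟩).symm
  have hsplit : Kconv φ x = (∫ y in (x - π)..x, Kper (x - y) * φ y)
      + ∫ y in x..(x + π), Kper (x - y) * φ y := by
    rw [hshift, intervalIntegral.integral_add_adjacent_intervals i1 i2]
  -- expand each half
  have half : ∀ (A a b : ℝ), (∫ y in a..b, ((1 / (4 * π)) * (A - y) ^ 2 - π / 12) * φ y)
      = (1 / (4 * π)) * (A ^ 2 * (∫ y in a..b, φ y) - 2 * A * (∫ y in a..b, y * φ y)
          + ∫ y in a..b, y ^ 2 * φ y) - (π / 12) * ∫ y in a..b, φ y := by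
    intro A a b
    have : ∀ y, ((1 / (4 * π)) * (A - y) ^ 2 - π / 12) * φ y
        = (1 / (4 * π)) * ((A - y) ^ 2 * φ y) - (π / 12) * φ y := fun y => by ring
    rw [intervalIntegral.integral_congr (fun y _ => this y), intervalIntegral.integral_sub,
      intervalIntegral.integral_const_mul, intervalIntegral.integral_const_mul,
      quad_int hφc]
    · exact (continuous_const.mul (((continuous_const.sub continuous_id).pow 2).mul hφc)).intervalIntegrable _ _
    · exact (continuous_const.mul hφc).intervalIntegrable _ _
  rw [hsplit, e1, e2, half, half, Psi,
    sub_P0 hφc, sub_P0 hφc, sub_P1 hφc, sub_P1 hφc, sub_P2 hφc, sub_P2 hφc]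
  have hz := mean_zero_window hφp hφ0 x
  have hadd : (∫ y in (x-π)..x, φ y) + (∫ y in x..(x+π), φ y) = ∫ y in (x-π)..(x+π), φ y :=
    intervalIntegral.integral_add_adjacent_intervals (hφc.intervalIntegrable _ _) (hφc.intervalIntegrable _ _)
  rw [hz] at hadd
  have h12 : (π / 12) * (∫ y in (x-π)..x, φ y) + (π / 12) * (∫ y in x..(x+π), φ y) = 0 := by
    rw [← mul_add, hadd, mul_zero]
  ring_nf
  ring_nf at h12
  linarith [h12]

section
variable {φ : ℝ → ℝ} (hφc : Continuous φ)

include hφc in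
lemma ftc (g : ℝ → ℝ) (hg : Continuous g) (b : ℝ) :
    HasDerivAt (fun u => ∫ y in (0:ℝ)..u, g y * φ y) (g b * φ b) b :=
  intervalIntegral.integral_hasDerivAt_right ((hg.mul hφc).intervalIntegrable _ _)
    ((hg.mul hφc).stronglyMeasurable.stronglyMeasurableAtFilter) ((hg.mul hφc).continuousAt)

include hφc in
lemma hP0' (b : ℝ) : HasDerivAt (P0 φ) (φ b) b := by
  have := ftc hφc (fun _ => 1) continuous_const b
  show HasDerivAt (fun u => ∫ y in (0:ℝ)..u, φ y) (φ b) b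
  simpa using this

include hφc in
lemma hP1' (b : ℝ) : HasDerivAt (P1 φ) (b * φ b) b := ftc hφc _ continuous_id b

include hφc in
lemma hP2' (b : ℝ) : HasDerivAt (P2 φ) (b ^ 2 * φ b) b := ftc hφc _ (continuous_pow 2) b

include hφc in
lemma hP0shift (c x : ℝ) : HasDerivAt (fun x => P0 φ (x + c)) (φ (x + c)) x := by
  simpa [Function.comp_def] using (hP0' hφc (x + c)).comp x ((hasDerivAt_id x).add_const c)

include hφc in
lemma hP1shift (c x : ℝ) : HasDerivAt (fun x => P1 φ (x + c)) ((x + c) * φ (x + c)) x := by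
  simpa [Function.comp_def] using (hP1' hφc (x + c)).comp x ((hasDerivAt_id x).add_const c)

include hφc in
lemma hP2shift (c x : ℝ) : HasDerivAt (fun x => P2 φ (x + c)) ((x + c) ^ 2 * φ (x + c)) x := by
  simpa [Function.comp_def] using (hP2' hφc (x + c)).comp x ((hasDerivAt_id x).add_const c)

variable (hφp : Function.Periodic φ (2 * π)) (hφ0 : (∫ y in (-π)..π, φ y) = 0)

include hφc hφp hφ0 in
lemma hPsi_deriv (hP0per : ∀ x : ℝ, P0 φ (x + π) = P0 φ (x - π)) (x : ℝ) :
    HasDerivAt (Psi φ) (D1 φ x) x := by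
  have hπ := Real.pi_pos
  have hq : φ (x + π) = φ (x - π) := by
    have := hφp (x - π); rw [show x - π + 2 * π = x + π by ring] at this; exact this
  have hm : ∀ g : ℝ → ℝ, (fun x : ℝ => g (x - π)) = fun x : ℝ => g (x + (-π)) := by
    intro g; funext t; rw [sub_eq_add_neg]
  have h0x := hP0' hφc x
  have h0m : HasDerivAt (fun x => P0 φ (x - π)) (φ (x - π)) x := by
    rw [hm]; simpa [sub_eq_add_neg] using hP0shift hφc (-π) x
  have h0p : HasDerivAt (fun x => P0 φ (x + π)) (φ (x + π)) x := hP0shift hφc π x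
  have h1x := hP1' hφc x
  have h1m : HasDerivAt (fun x => P1 φ (x - π)) ((x - π) * φ (x - π)) x := by
    rw [hm]; simpa [sub_eq_add_neg] using hP1shift hφc (-π) x
  have h1p : HasDerivAt (fun x => P1 φ (x + π)) ((x + π) * φ (x + π)) x := hP1shift hφc π x
  have h2x := hP2' hφc x
  have h2m : HasDerivAt (fun x => P2 φ (x - π)) ((x - π) ^ 2 * φ (x - π)) x := by
    rw [hm]; simpa [sub_eq_add_neg] using hP2shift hφc (-π) x
  have h2p : HasDerivAt (fun x => P2 φ (x + π)) ((x + π) ^ 2 * φ (x + π)) x := hP2shift hφc π x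
  have hsm : HasDerivAt (fun x : ℝ => (x - π) ^ 2) (2 * (x - π)) x := by
    simpa [Pi.pow_def] using ((hasDerivAt_id x).sub_const π).pow 2
  have hsp : HasDerivAt (fun x : ℝ => (x + π) ^ 2) (2 * (x + π)) x := by
    simpa [Pi.pow_def] using ((hasDerivAt_id x).add_const π).pow 2
  have hlm : HasDerivAt (fun x : ℝ => 2 * (x - π)) 2 x := by
    simpa using ((hasDerivAt_id x).sub_const π).const_mul 2
  have hlp : HasDerivAt (fun x : ℝ => 2 * (x + π)) 2 x := by
    simpa using ((hasDerivAt_id x).add_const π).const_mul 2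
  have t1 := hsm.mul (h0x.sub h0m)
  have t2 := hlm.mul (h1x.sub h1m)
  have t3 := h2x.sub h2m
  have t4 := hsp.mul (h0p.sub h0x)
  have t5 := hlp.mul (h1p.sub h1x)
  have t6 := h2p.sub h2x
  have big := ((((t1.sub t2).add t3).add ((t4.sub t5).add t6)).const_mul (1 / (4 * π)))
  have : Psi φ = fun x => (1 / (4 * π)) *
      ((x - π) ^ 2 * (P0 φ x - P0 φ (x - π)) - 2 * (x - π) * (P1 φ x - P1 φ (x - π))
        + (P2 φ x - P2 φ (x - π))
        + ((x + π) ^ 2 * (P0 φ (x + π) - P0 φ x) - 2 * (x + π) * (P1 φ (x + π) - P1 φ x)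
        + (P2 φ (x + π) - P2 φ x))) := rfl
  rw [this]
  refine big.congr_deriv ?_
  simp only [Pi.sub_apply]
  rw [D1, hq, hP0per x]
  field_simp
  ring

include hφc hφp in
lemma hD1_deriv (x : ℝ) : HasDerivAt (D1 φ) (-φ x) x := by
  have hπ := Real.pi_pos
  have hq : φ (x + π) = φ (x - π) := by
    have := hφp (x - π); rw [show x - π + 2 * π = x + π by ring] at this; exact this
  have hm : ∀ g : ℝ → ℝ, (fun x : ℝ => g (x - π)) = fun x : ℝ => g (x + (-π)) := by
    intro g; funext t; rw [sub_eq_add_neg]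
  have h0x := hP0' hφc x
  have h0m : HasDerivAt (fun x => P0 φ (x - π)) (φ (x - π)) x := by
    rw [hm]; simpa [sub_eq_add_neg] using hP0shift hφc (-π) x
  have h1m : HasDerivAt (fun x => P1 φ (x - π)) ((x - π) * φ (x - π)) x := by
    rw [hm]; simpa [sub_eq_add_neg] using hP1shift hφc (-π) x
  have h1p : HasDerivAt (fun x => P1 φ (x + π)) ((x + π) * φ (x + π)) x := hP1shift hφc π x
  have big := ((h0x.sub h0m).neg).sub ((h1p.sub h1m).const_mul (1 / (2 * π)))
  have : D1 φ = fun x => -(P0 φ x - P0 φ (x - π)) - (1 / (2 * π)) * (P1 φ (x + π) - P1 φ (x - π)) := rfl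
  rw [this]
  refine big.congr_deriv ?_
  rw [hq]
  field_simp
  ring
end

lemma upper_bound (c σ α B : ℝ) (hc : 0 < c) (hα : 0 < α)
    (φ : ℝ → ℝ) (hφc : Continuous φ) (hφp : Function.Periodic φ (2 * π))
    (hφ0 : (∫ y in (-π)..π, φ y) = 0)
    (heq : ∀ x, -c * φ x + (σ / 2) * (φ x) ^ 2 + (α / 3) * (φ x) ^ 3 = -(Kconv φ x) + B) :
    ∀ x, φ x ≤ Real.sqrt (σ ^ 2 / (4 * α ^ 2) + c / α) - σ / (2 * α) := by
  have hπ := Real.pi_pos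
  set R := Real.sqrt (σ ^ 2 / (4 * α ^ 2) + c / α) with hR
  set p := R - σ / (2 * α) with hpdef
  have hR2 : R ^ 2 = σ ^ 2 / (4 * α ^ 2) + c / α := by
    rw [hR, sq]
    exact Real.mul_self_sqrt (by positivity)
  have hRnn : 0 ≤ R := Real.sqrt_nonneg _
  clear_value R
  have hproot : α * p ^ 2 + σ * p - c = 0 := by
    have hα' : (α:ℝ) ≠ 0 := hα.ne'
    have h1 : 4 * α ^ 2 * R ^ 2 = σ ^ 2 + 4 * c * α := by
      rw [hR2]; field_simp
    rw [hpdef]; field_simp; linear_combination h1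
  clear_value p
  have hppos : 0 < p := by
    have hsq : (σ / (2 * α)) ^ 2 = σ ^ 2 / (4 * α ^ 2) := by
      rw [div_pow]; ring_nf
    by_contra h
    push_neg at h
    have h2 : R ≤ σ / (2 * α) := by rw [hpdef] at h; linarith
    nlinarith [div_pos hc hα, mul_self_le_mul_self hRnn h2, hsq, hR2]
  have hσp : 0 ≤ 2 * α * p + σ := by
    have : 2 * α * p + σ = 2 * α * R := by rw [hpdef]; field_simp; ring
    rw [this]; positivity
  -- suppose not
  by_contra hcon
  push_neg at hcon
  obtain ⟨x₀, hx₀⟩ := hcon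
  set s := (p + φ x₀) / 2 with hsdef
  clear_value s
  have hs1 : p < s := by rw [hsdef]; linarith
  have hs2 : s < φ x₀ := by rw [hsdef]; linarith
  have hspos : 0 < s := lt_trans hppos hs1
  -- the cubic F
  obtain ⟨F, hF⟩ : ∃ F : ℝ → ℝ, ∀ t, F t = -c * t + (σ / 2) * t ^ 2 + (α / 3) * t ^ 3 :=
    ⟨_, fun t => rfl⟩
  have hFmono : ∀ u v : ℝ, p < u → u < v → F u < F v := by
    intro u v hu huv
    have h6 : F v - F u = (v - u) * ((2*α*(v^2 + v*u + u^2) + 3*σ*(v+u) - 6*c) / 6) := by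
      rw [hF v, hF u]; field_simp; ring
    have hq : 0 < 2*α*(v^2 + v*u + u^2) + 3*σ*(v+u) - 6*c := by
      nlinarith [mul_nonneg hσp (by linarith : (0:ℝ) ≤ v + u - 2*p), sq_nonneg (v - p), sq_nonneg (u - p), mul_pos (by linarith : (0:ℝ) < v - p) (by linarith : (0:ℝ) < u - p)]
    have hpos : 0 < (v - u) * ((2*α*(v^2 + v*u + u^2) + 3*σ*(v+u) - 6*c) / 6) :=
      mul_pos (by linarith) (by linarith)
    linarith [h6, hpos]
  -- Ψ = B - F ∘ φ
  have hΨF : ∀ t, Psi φ t = B - F (φ t) := by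
    intro t
    have h := heq t
    have h2 := conv_eq hφc hφp hφ0 t
    rw [hF]
    linarith [h, h2]
  -- there is a point with value ≤ s
  have hz : ∃ z, φ z ≤ s := by
    by_contra h
    push_neg at h
    have hle : (∫ y in (-π)..π, (fun _ => s) y) ≤ ∫ y in (-π)..π, φ y := by
      apply intervalIntegral.integral_mono_on (by linarith)
        (intervalIntegrable_const) (hφc.intervalIntegrable _ _)
      intro y _; exact (h y).le
    rw [hφ0] at hle
    rw [intervalIntegral.integral_const] at hle
    simp at hle
    nlinarith
  obtain ⟨z, hzs⟩ := hz
  -- construct a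
  set S1 : Set ℝ := {t | t ≤ x₀ ∧ φ t ≤ s} with hS1
  have hS1c : IsClosed S1 := by
    have hSeq : S1 = {t | t ≤ x₀} ∩ φ ⁻¹' (Iic s) := rfl
    rw [hSeq]
    exact (isClosed_Iic).inter (IsClosed.preimage hφc isClosed_Iic)
  have hz₁ : ∃ z₁, z₁ ∈ S1 := by
    obtain ⟨n, hn⟩ : ∃ n : ℤ, z - x₀ ≤ n * (2 * π) := by
      refine ⟨⌈(z - x₀) / (2 * π)⌉, ?_⟩
      rw [← div_le_iff₀ (by positivity)]
      exact Int.le_ceil _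
    refine ⟨z - n * (2 * π), by linarith, ?_⟩
    rw [hφp.sub_int_mul_eq n]
    exact hzs
  have hS1bdd : BddAbove S1 := ⟨x₀, fun t ht => ht.1⟩
  set a := sSup S1 with hadef
  have haS : a ∈ S1 := hS1c.csSup_mem hz₁ hS1bdd
  clear_value a
  have ha_lt : a < x₀ := lt_of_le_of_ne haS.1 (by
    intro h; rw [h] at haS; exact absurd haS.2 (by linarith))
  have hgt_right : ∀ t, a < t → t ≤ x₀ → s < φ t := by
    intro t h1 h2
    by_contra h
    push_neg at h
    have : t ≤ a := hadef ▸ le_csSup hS1bdd ⟨h2, h⟩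
    linarith
  have hφa : φ a = s := by
    refine le_antisymm haS.2 ?_
    have htd : Filter.Tendsto φ (nhdsWithin a (Ioi a)) (nhds (φ a)) :=
      (hφc.continuousAt).continuousWithinAt.tendsto
    refine ge_of_tendsto htd ?_
    filter_upwards [Ioo_mem_nhdsGT_of_mem (Set.left_mem_Ico.2 ha_lt)] with t ht
    exact (hgt_right t ht.1 ht.2.le).le
  -- construct b
  set S2 : Set ℝ := {t | x₀ ≤ t ∧ φ t ≤ s} with hS2
  have hS2c : IsClosed S2 := by
    have hSeq : S2 = {t | x₀ ≤ t} ∩ φ ⁻¹' (Iic s) := rfl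
    rw [hSeq]
    exact (isClosed_Ici).inter (IsClosed.preimage hφc isClosed_Iic)
  have hz₂ : ∃ z₂, z₂ ∈ S2 := by
    obtain ⟨n, hn⟩ : ∃ n : ℤ, x₀ - z ≤ -(n : ℝ) * (2 * π) := by
      refine ⟨-⌈(x₀ - z) / (2 * π)⌉, ?_⟩
      push_cast
      rw [neg_neg, ← div_le_iff₀ (by positivity)]
      exact Int.le_ceil _
    refine ⟨z - n * (2 * π), by linarith, ?_⟩
    rw [hφp.sub_int_mul_eq n]
    exact hzs
  have hS2bdd : BddBelow S2 := ⟨x₀, fun t ht => ht.1⟩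
  set b := sInf S2 with hbdef
  have hbS : b ∈ S2 := hS2c.csInf_mem hz₂ hS2bdd
  clear_value b
  have hb_gt : x₀ < b := lt_of_le_of_ne hbS.1 (by
    intro h; rw [← h] at hbS; exact absurd hbS.2 (by linarith))
  have hlt_left : ∀ t, x₀ ≤ t → t < b → s < φ t := by
    intro t h1 h2
    by_contra h
    push_neg at h
    have : b ≤ t := hbdef ▸ csInf_le hS2bdd ⟨h1, h⟩
    linarith
  have hφb : φ b = s := by
    refine le_antisymm hbS.2 ?_
    have htd : Filter.Tendsto φ (nhdsWithin b (Iio b)) (nhds (φ b)) :=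
      (hφc.continuousAt).continuousWithinAt.tendsto
    refine ge_of_tendsto htd ?_
    filter_upwards [Ioo_mem_nhdsLT_of_mem (Set.right_mem_Ioc.2 hb_gt)] with t ht
    exact (hlt_left t ht.1.le ht.2).le
  have hab : a < b := ha_lt.trans hb_gt
  -- φ > s on the open interval
  have hmid : ∀ t ∈ Ioo a b, s < φ t := by
    intro t ht
    rcases le_or_gt t x₀ with h | h
    · exact hgt_right t ht.1 h
    · exact hlt_left t h.le ht.2
  -- concavity of Psi on [a,b]
  have hP0per := P0_per hφc hφp hφ0
  have hder : ∀ t, HasDerivAt (Psi φ) (D1 φ t) t := hPsi_deriv hφc hφp hφ0 hP0per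
  have hder2 : ∀ t, HasDerivAt (D1 φ) (-φ t) t := hD1_deriv hφc hφp
  have hderiv1 : deriv (Psi φ) = D1 φ := funext fun t => (hder t).deriv
  have hconc : ConcaveOn ℝ (Icc a b) (Psi φ) := by
    apply concaveOn_of_deriv2_nonpos (convex_Icc a b)
      (fun t _ => (hder t).continuousAt.continuousWithinAt)
      (fun t _ => ((hder t).differentiableAt).differentiableWithinAt)
    · rw [hderiv1]
      exact fun t _ => ((hder2 t).differentiableAt).differentiableWithinAt
    · intro t ht
      rw [interior_Icc] at ht
      have : deriv^[2] (Psi φ) t = -φ t := by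
        show deriv (deriv (Psi φ)) t = -φ t
        rw [hderiv1]
        exact (hder2 t).deriv
      rw [this]
      have := hmid t ht
      linarith
  -- the contradiction
  have hseg : x₀ ∈ segment ℝ a b := by
    rw [segment_eq_Icc hab.le]
    exact ⟨ha_lt.le, hb_gt.le⟩
  have hmin := hconc.ge_on_segment (Set.left_mem_Icc.2 hab.le) (Set.right_mem_Icc.2 hab.le) hseg
  rw [hΨF a, hΨF b, hΨF x₀, hφa, hφb, min_self] at hmin
  have := hFmono s (φ x₀) hs1 hs2
  linarith

/-- Amplitude bound for the reduced Gardner–Ostrovsky equation: if `α > 0`, any continuous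
periodic zero-mean solution of `−cφ + (σ/2)φ² + (α/3)φ³ = −K∗φ + B` has amplitude at most
`2√(σ²/(4α²) + c/α)`. -/
theorem amplitude_bound_reduced_GO (c σ α B : ℝ) (hc : 0 < c) (hα : 0 < α)
    (φ : ℝ → ℝ) (hφc : Continuous φ) (hφp : Function.Periodic φ (2 * π))
    (hφ0 : (∫ y in (-π)..π, φ y) = 0)
    (heq : ∀ x, -c * φ x + (σ / 2) * (φ x) ^ 2 + (α / 3) * (φ x) ^ 3 = -(Kconv φ x) + B) :
    ∀ x y, φ x - φ y ≤ 2 * Real.sqrt (σ ^ 2 / (4 * α ^ 2) + c / α) := by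
  intro x y
  have hα' : (α:ℝ) ≠ 0 := hα.ne'
  have h1 := upper_bound c σ α B hc hα φ hφc hφp hφ0 heq x
  have hKneg : ∀ t, Kconv (fun u => -φ u) t = -Kconv φ t := by
    intro t
    rw [Kconv, Kconv, ← intervalIntegral.integral_neg]
    congr 1
    funext u
    ring
  have heq' : ∀ t, -c * (-φ t) + ((-σ) / 2) * (-φ t) ^ 2 + (α / 3) * (-φ t) ^ 3
      = -(Kconv (fun u => -φ u) t) + (-B) := by
    intro t
    rw [hKneg t]
    linear_combination (-1) * heq t
  have h2 := upper_bound c (-σ) α (-B) hc hα (fun t => -φ t) hφc.neg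
    (fun t => by simp [hφp t]) (by rw [intervalIntegral.integral_neg, hφ0]; ring) heq' y
  simp only [neg_sq] at h2
  have hd : (-σ) / (2 * α) = -(σ / (2 * α)) := neg_div _ _
  rw [hd] at h2
  linarith [h1, h2]
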